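/- For the configuration c : ℤ³ → {0,1} with c(i,0,0) = c(0,i,n) = 1 for all i ∈ ℤ and 0 elsewhere (n ≥ 3 fixed), the number of distinct patterns of shape D = {0,…,n−1}³ occurring in c equals 2n² + 1, which is strictly less than n³ = |D|. -/

import Mathlib

set_option maxHeartbeats 1000000

abbrev Dom (n : ℕ) := {u : ℤ × ℤ × ℤ // 0 ≤ u.1 ∧ u.1 < (n : ℤ) ∧ 0 ≤ u.2.1 ∧ u.2.1 < (n : ℤ) ∧
        0 ≤ u.2.2 ∧ u.2.2 < (n : ℤ)}

def pX (n : ℕ) (p : ℤ × ℤ) : Dom n → ℤ :=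
  fun u => if u.1.2.1 = p.1 ∧ u.1.2.2 = p.2 then 1 else 0

def pY (n : ℕ) (p : ℤ × ℤ) : Dom n → ℤ :=
  fun u => if u.1.1 = p.1 ∧ u.1.2.2 = p.2 then 1 else 0

lemma ite01 {A B : Prop} [Decidable A] [Decidable B]
    (h : (if A then (1:ℤ) else 0) = if B then 1 else 0) : A ↔ B := by
  by_cases hA : A <;> by_cases hB : B <;> simp [hA, hB] at h ⊢

/-- The two-lines configuration in ℤ³ has exactly `2n²+1` patterns of shape
`{0,…,n-1}³`, which is less than `n³`. -/
theorem stmt_16 (n : ℕ) (hn : 3 ≤ n) (c : ℤ × ℤ × ℤ → ℤ)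
    (hc : ∀ p : ℤ × ℤ × ℤ,
      c p = if (p.2.1 = 0 ∧ p.2.2 = 0) ∨ (p.1 = 0 ∧ p.2.2 = (n : ℤ)) then 1 else 0) :
    {pat : {u : ℤ × ℤ × ℤ // 0 ≤ u.1 ∧ u.1 < (n : ℤ) ∧ 0 ≤ u.2.1 ∧ u.2.1 < (n : ℤ) ∧
        0 ≤ u.2.2 ∧ u.2.2 < (n : ℤ)} → ℤ |
        ∃ v : ℤ × ℤ × ℤ, ∀ u, pat u = c (v + u.1)}.ncard = 2 * n ^ 2 + 1 ∧
    2 * n ^ 2 + 1 < n ^ 3 := by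
  have hn3 : (3 : ℤ) ≤ (n : ℤ) := by exact_mod_cast hn
  set F : Finset (ℤ × ℤ) := Finset.Ico (0:ℤ) (n:ℤ) ×ˢ Finset.Ico (0:ℤ) (n:ℤ) with hF
  have hFmem : ∀ p : ℤ × ℤ, p ∈ F ↔ 0 ≤ p.1 ∧ p.1 < (n:ℤ) ∧ 0 ≤ p.2 ∧ p.2 < (n:ℤ) := by
    intro p
    simp [hF, Finset.mem_product, Finset.mem_Ico, and_assoc]
  have hset : {pat : Dom n → ℤ | ∃ v : ℤ × ℤ × ℤ, ∀ u, pat u = c (v + u.1)} =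
      insert (fun _ => (0:ℤ)) (pX n '' ↑F ∪ pY n '' ↑F) := by
    ext pat
    constructor
    · rintro ⟨⟨a, b, d⟩, hv⟩
      by_cases h1 : 0 ≤ -b ∧ -b < (n:ℤ) ∧ 0 ≤ -d ∧ -d < (n:ℤ)
      · right; left
        refine ⟨(-b, -d), (hFmem _).2 (by exact h1), ?_⟩
        funext u
        rcases u with ⟨⟨i, j, k⟩, hi0, hi1, hj0, hj1, hk0, hk1⟩
        dsimp only at hi0 hi1 hj0 hj1 hk0 hk1
        simp only [hv, hc, pX, Prod.mk_add_mk]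
        split_ifs <;> omega
      · by_cases h2 : 0 ≤ -a ∧ -a < (n:ℤ) ∧ 0 ≤ (n:ℤ) - d ∧ (n:ℤ) - d < (n:ℤ)
        · right; right
          refine ⟨(-a, (n:ℤ) - d), (hFmem _).2 (by exact h2), ?_⟩
          funext u
          rcases u with ⟨⟨i, j, k⟩, hi0, hi1, hj0, hj1, hk0, hk1⟩
          dsimp only at hi0 hi1 hj0 hj1 hk0 hk1
          simp only [hv, hc, pY, Prod.mk_add_mk]
          split_ifs <;> omega
        · left
          funext u
          rcases u with ⟨⟨i, j, k⟩, hi0, hi1, hj0, hj1, hk0, hk1⟩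
          dsimp only at hi0 hi1 hj0 hj1 hk0 hk1
          simp only [hv, hc, Prod.mk_add_mk]
          split_ifs <;> omega
    · rintro (h0 | ⟨p, hp, rfl⟩ | ⟨p, hp, rfl⟩)
      · refine ⟨(1, 1, 1), ?_⟩
        intro u
        rcases u with ⟨⟨i, j, k⟩, hi0, hi1, hj0, hj1, hk0, hk1⟩
        dsimp only at hi0 hi1 hj0 hj1 hk0 hk1
        rw [h0, hc]
        simp only [Prod.mk_add_mk]
        split_ifs <;> omega
      · rw [Finset.mem_coe, hFmem] at hp
        refine ⟨(0, -p.1, -p.2), ?_⟩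
        intro u
        rcases u with ⟨⟨i, j, k⟩, hi0, hi1, hj0, hj1, hk0, hk1⟩
        dsimp only at hi0 hi1 hj0 hj1 hk0 hk1
        simp only [hc, pX, Prod.mk_add_mk]
        split_ifs <;> omega
      · rw [Finset.mem_coe, hFmem] at hp
        refine ⟨(-p.1, 1, (n:ℤ) - p.2), ?_⟩
        intro u
        rcases u with ⟨⟨i, j, k⟩, hi0, hi1, hj0, hj1, hk0, hk1⟩
        dsimp only at hi0 hi1 hj0 hj1 hk0 hk1
        simp only [hc, pY, Prod.mk_add_mk]
        split_ifs <;> omega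
  have hinjX : Set.InjOn (pX n) ↑F := by
    intro p hp q hq h
    rw [Finset.mem_coe, hFmem] at hp hq
    have h0 := congrFun h ⟨(0, p.1, p.2), (show (0:ℤ) ≤ 0 by norm_num), (show (0:ℤ) < (n:ℤ) by omega), hp.1, hp.2.1, hp.2.2.1, hp.2.2.2⟩
    simp only [pX] at h0
    have h1 : p.1 = q.1 ∧ p.2 = q.2 := (ite01 h0).mp (by simp)
    exact Prod.ext h1.1 h1.2
  have hinjY : Set.InjOn (pY n) ↑F := by
    intro p hp q hq h
    rw [Finset.mem_coe, hFmem] at hp hq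
    have h0 := congrFun h ⟨(p.1, 0, p.2), hp.1, hp.2.1, (show (0:ℤ) ≤ 0 by norm_num), (show (0:ℤ) < (n:ℤ) by omega), hp.2.2.1, hp.2.2.2⟩
    simp only [pY] at h0
    have h1 : p.1 = q.1 ∧ p.2 = q.2 := (ite01 h0).mp (by simp)
    exact Prod.ext h1.1 h1.2
  have hdisj : Disjoint (pX n '' ↑F) (pY n '' ↑F) := by
    rw [Set.disjoint_left]
    rintro pat ⟨p, hp, rfl⟩ ⟨q, hq, hpq⟩
    rw [Finset.mem_coe, hFmem] at hp hq
    have h0 := congrFun hpq ⟨(0, p.1, p.2), (show (0:ℤ) ≤ 0 by norm_num), (show (0:ℤ) < (n:ℤ) by omega), hp.1, hp.2.1, hp.2.2.1, hp.2.2.2⟩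
    have h1 := congrFun hpq ⟨(1, p.1, p.2), (show (0:ℤ) ≤ 1 by norm_num), (show (1:ℤ) < (n:ℤ) by omega), hp.1, hp.2.1, hp.2.2.1, hp.2.2.2⟩
    simp only [pX, pY] at h0 h1
    have e0 : (0:ℤ) = q.1 ∧ p.2 = q.2 := (ite01 h0.symm).mp (by simp)
    have e1 : (1:ℤ) = q.1 ∧ p.2 = q.2 := (ite01 h1.symm).mp (by simp)
    have := e0.1
    have := e1.1
    omega
  have hnotmem : (fun _ => (0:ℤ)) ∉ pX n '' ↑F ∪ pY n '' ↑F := by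
    rintro (⟨p, hp, h⟩ | ⟨p, hp, h⟩) <;> rw [Finset.mem_coe, hFmem] at hp
    · have h0 := congrFun h ⟨(0, p.1, p.2), (show (0:ℤ) ≤ 0 by norm_num), (show (0:ℤ) < (n:ℤ) by omega), hp.1, hp.2.1, hp.2.2.1, hp.2.2.2⟩
      simp only [pX] at h0
      simp at h0
    · have h0 := congrFun h ⟨(p.1, 0, p.2), hp.1, hp.2.1, (show (0:ℤ) ≤ 0 by norm_num), (show (0:ℤ) < (n:ℤ) by omega), hp.2.2.1, hp.2.2.2⟩
      simp only [pY] at h0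
      simp at h0
  have hfinX : (pX n '' ↑F).Finite := F.finite_toSet.image _
  have hfinY : (pY n '' ↑F).Finite := F.finite_toSet.image _
  have hFcard : F.card = n * n := by
    simp [hF, Int.card_Ico]
  constructor
  · rw [hset, Set.ncard_insert_of_notMem hnotmem (hfinX.union hfinY),
      Set.ncard_union_eq hdisj hfinX hfinY,
      Set.ncard_image_of_injOn hinjX, Set.ncard_image_of_injOn hinjY,
      Set.ncard_coe_finset, hFcard]
    ring
  · nlinarith [hn, sq_nonneg n]
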